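/- Let X be a smooth projective surface, W obtained by contracting a configuration E with φ*K_W = K_X + E, E² = −1, K_X·E = 1, K_X² = 0 and K_W² = 1. If X is not minimal and its minimal model S has 0 < K_S² ≤ 1 so that X → S is a single blow-up with exceptional (−1)-curve G, and m = G·E ≥ 2, then the image Ē = f_*E satisfies K_S·Ē = 1 − m < 0, contradicting nefness of K_S. Hence if X has general type and K_X² = 0, K_X·E = 1, E² = −1, K_W² = 1 with K_W ample, a contradiction arises, so X is not of general type. -/
import Mathlib

/-- The intersection-theoretic contradiction excluding general type.
`i` is the intersection pairing on divisor classes of the smooth surface X,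
`fKS = f*K_S`, `fEbar = f*Ē`.  From K_X = f*K_S + G, f*Ē = E + mG, K_X·E = 1,
K_X·G = −1, f*K_S·G = 0 and m = G·E ≥ 2 (ampleness of K_W) one gets
K_S·Ē = f*K_S·f*Ē = 1 − m < 0, contradicting nefness of K_S. -/
theorem stmt5 {D : Type*} [AddCommGroup D] (i : D → D → ℤ)
    (haddl : ∀ a b c : D, i (a + b) c = i a c + i b c)
    (haddr : ∀ a b c : D, i a (b + c) = i a b + i a c)
    (hsmulr : ∀ (n : ℤ) (a b : D), i a (n • b) = n * i a b)
    (KX fKS E G fEbar : D) (m : ℤ)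
    (hKXE : i KX E = 1)
    (hKXG : i KX G = -1)
    (hKX : KX = fKS + G)
    (hfE : fEbar = E + m • G)
    (hproj : i fKS G = 0)      -- projection formula: f*K_S · G = 0
    (hGE : i G E = m)          -- definition of m
    (hm : 2 ≤ m)               -- forced by ampleness of K_W
    (hnef : 0 ≤ i fKS fEbar)   -- K_S nef
    : False := by
  have h1 : i fKS E = 1 - m := by
    have := hKXE
    rw [hKX, haddl, hGE] at this
    omega
  rw [hfE, haddr, hsmulr, hproj, h1] at hnef
  nlinarith
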